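/- (Theorem 2, zero-correlation case) Let u, v ∈ ℝ³ be unit vectors, λ > 0, N ≥ 1, L > 0 with 2((N+1)/N)‖u−v‖L ≥ λ. Then there exist t₁, t₂ ∈ ℝ³ with ‖t₁‖ = ‖t₂‖ = L such that the two-ULA far-field correlation |∑_{n=1}^{N} e^{j(2π/λ)(n/N)(u−v)^T t₁} + ∑_{n=1}^{N} e^{j(2π/λ)(n/N)(u−v)^T t₂}| = 0. -/

import Mathlib

open Real

/-- Theorem 2, zero-correlation case: if `2((N+1)/N)‖u-v‖L ≥ λ`, there exist
two drone positions `t₁, t₂` on the sphere of radius `L` making the two-ULA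
far-field correlation vanish. -/
theorem stmt_10 (u v : EuclideanSpace ℝ (Fin 3)) (hu : ‖u‖ = 1) (hv : ‖v‖ = 1)
    (lam L : ℝ) (hlam : 0 < lam) (hL : 0 < L) (N : ℕ) (hN : 1 ≤ N)
    (hcond : lam ≤ 2 * (((N : ℝ) + 1) / (N : ℝ)) * ‖u - v‖ * L) :
    ∃ t₁ t₂ : EuclideanSpace ℝ (Fin 3), ‖t₁‖ = L ∧ ‖t₂‖ = L ∧
      ‖(∑ n ∈ Finset.Icc 1 N,
            Complex.exp (Complex.I * ((2 * π / lam) * ((n : ℝ) / (N : ℝ))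
              * (inner ℝ (u - v) t₁ : ℝ) : ℝ)))
          + ∑ n ∈ Finset.Icc 1 N,
              Complex.exp (Complex.I * ((2 * π / lam) * ((n : ℝ) / (N : ℝ))
                * (inner ℝ (u - v) t₂ : ℝ) : ℝ))‖ = 0 := by
  have hNR : (0:ℝ) < (N:ℝ) := by exact_mod_cast hN
  have hx : u - v ≠ 0 := by
    intro h
    rw [h, norm_zero] at hcond
    nlinarith
  have hxn : (0:ℝ) < ‖u - v‖ := norm_pos_iff.mpr hx
  set x := u - v with hxdef
  -- the target inner product value
  set d : ℝ := lam * N / (2 * ((N:ℝ) + 1)) with hd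
  have hdpos : 0 < d := by positivity
  have hcond' : lam * N ≤ 2 * ((N:ℝ)+1) * ‖x‖ * L := by
    have e : 2 * (((N:ℝ)+1)/N) * ‖x‖ * L = (2 * ((N:ℝ)+1) * ‖x‖ * L) / N := by
      field_simp
    rw [e, le_div_iff₀ hNR] at hcond
    linarith
  have hdle : d ≤ ‖x‖ * L := by
    rw [hd, div_le_iff₀ (by positivity)]
    nlinarith
  -- a unit vector orthogonal to x
  obtain ⟨p, hpo, hp1⟩ : ∃ p : EuclideanSpace ℝ (Fin 3),
      inner ℝ x p = (0:ℝ) ∧ ‖p‖ = 1 := by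
    haveI : Fact (Module.finrank ℝ (EuclideanSpace ℝ (Fin 3)) = 2 + 1) := ⟨by simp⟩
    have hdim : 0 < Module.finrank ℝ ((ℝ ∙ x)ᗮ : Submodule ℝ (EuclideanSpace ℝ (Fin 3))) := by
      rw [Submodule.finrank_orthogonal_span_singleton (n := 2) hx]; norm_num
    haveI : Nontrivial ((ℝ ∙ x)ᗮ : Submodule ℝ (EuclideanSpace ℝ (Fin 3))) :=
      Module.finrank_pos_iff.mp hdim
    obtain ⟨w, hw0⟩ := exists_ne (0 : ((ℝ ∙ x)ᗮ : Submodule ℝ (EuclideanSpace ℝ (Fin 3))))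
    have hwmem : (w : EuclideanSpace ℝ (Fin 3)) ∈ (ℝ ∙ x)ᗮ := w.2
    have hwx : inner ℝ x (w : EuclideanSpace ℝ (Fin 3)) = (0:ℝ) :=
      (Submodule.mem_orthogonal _ _).mp hwmem x (Submodule.mem_span_singleton_self x)
    have hwne : (w : EuclideanSpace ℝ (Fin 3)) ≠ 0 := by
      simpa [Submodule.coe_eq_zero] using hw0
    refine ⟨‖(w : EuclideanSpace ℝ (Fin 3))‖⁻¹ • w, ?_, ?_⟩
    · rw [inner_smul_right, hwx]; ring
    · rw [norm_smul, norm_inv, norm_norm, inv_mul_cancel₀ (norm_ne_zero_iff.mpr hwne)]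
  set c : ℝ := d / ‖x‖^2 with hc
  have hble : (0:ℝ) ≤ L^2 - d^2 / ‖x‖^2 := by
    rw [sub_nonneg, div_le_iff₀ (by positivity)]
    nlinarith
  set b : ℝ := Real.sqrt (L^2 - d^2 / ‖x‖^2) with hb
  have hb2 : b^2 = L^2 - d^2 / ‖x‖^2 := Real.sq_sqrt hble
  set t₁ : EuclideanSpace ℝ (Fin 3) := c • x + b • p with ht₁
  have hinner1 : (inner ℝ x t₁ : ℝ) = d := by
    rw [ht₁, inner_add_right, inner_smul_right, inner_smul_right, hpo,
      real_inner_self_eq_norm_sq, hc]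
    field_simp
    ring
  have hnormsq : ‖t₁‖^2 = L^2 := by
    rw [ht₁, norm_add_sq_real, inner_smul_left, inner_smul_right, hpo,
      norm_smul, norm_smul, hp1, mul_pow, mul_pow, Real.norm_eq_abs, Real.norm_eq_abs]
    rw [sq_abs, sq_abs, hb2, hc]
    field_simp
    ring
  have hnorm1 : ‖t₁‖ = L := by
    calc ‖t₁‖ = Real.sqrt (‖t₁‖^2) := (Real.sqrt_sq (norm_nonneg _)).symm
    _ = Real.sqrt (L^2) := by rw [hnormsq]
    _ = L := Real.sqrt_sq hL.le
  refine ⟨t₁, -t₁, hnorm1, by simpa using hnorm1, ?_⟩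
  have hinner2 : (inner ℝ x (-t₁) : ℝ) = -d := by rw [inner_neg_right, hinner1]
  have e1 : ∀ n ∈ Finset.Icc 1 N,
      (2 * π / lam) * ((n:ℝ)/N) * (inner ℝ x t₁ : ℝ) = π * n / ((N:ℝ)+1) := by
    intro n _
    rw [hinner1, hd]
    field_simp
  have e2 : ∀ n ∈ Finset.Icc 1 N,
      (2 * π / lam) * ((n:ℝ)/N) * (inner ℝ x (-t₁) : ℝ) = -(π * n / ((N:ℝ)+1)) := by
    intro n hn
    rw [hinner2]
    have := e1 n hn
    rw [hinner1] at this
    linarith [this]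
  have s1 : (∑ n ∈ Finset.Icc 1 N,
        Complex.exp (Complex.I * ((2 * π / lam) * ((n : ℝ) / (N : ℝ))
          * (inner ℝ x t₁ : ℝ) : ℝ)))
      = ∑ n ∈ Finset.Icc 1 N,
          Complex.exp (Complex.I * ((π * n / ((N:ℝ)+1) : ℝ) : ℂ)) :=
    Finset.sum_congr rfl fun n hn => by rw [e1 n hn]
  have s2 : (∑ n ∈ Finset.Icc 1 N,
        Complex.exp (Complex.I * ((2 * π / lam) * ((n : ℝ) / (N : ℝ))
          * (inner ℝ x (-t₁) : ℝ) : ℝ)))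
      = ∑ n ∈ Finset.Icc 1 N,
          Complex.exp (Complex.I * ((-(π * n / ((N:ℝ)+1)) : ℝ) : ℂ)) :=
    Finset.sum_congr rfl fun n hn => by rw [e2 n hn]
  rw [s1, s2]
  have key : (∑ n ∈ Finset.Icc 1 N, Complex.exp (Complex.I * ((-(π * n / ((N:ℝ)+1)) : ℝ) : ℂ)))
      = ∑ n ∈ Finset.Icc 1 N, -Complex.exp (Complex.I * ((π * n / ((N:ℝ)+1) : ℝ) : ℂ)) := by
    refine Finset.sum_nbij' (fun n => N + 1 - n) (fun n => N + 1 - n) ?_ ?_ ?_ ?_ ?_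
    · intro a ha; simp only [Finset.mem_Icc] at ha ⊢; omega
    · intro a ha; simp only [Finset.mem_Icc] at ha ⊢; omega
    · intro a ha; simp only [Finset.mem_Icc] at ha; show N + 1 - (N + 1 - a) = a; omega
    · intro a ha; simp only [Finset.mem_Icc] at ha; show N + 1 - (N + 1 - a) = a; omega
    · intro a ha
      simp only [Finset.mem_Icc] at ha
      have hcast : ((N + 1 - a : ℕ) : ℝ) = (N:ℝ) + 1 - a := by
        have := ha.2
        push_cast [Nat.cast_sub (by omega : a ≤ N + 1)]
        ring
      rw [hcast]
      have harg : π * ((N:ℝ) + 1 - a) / ((N:ℝ)+1) = π - π * a / ((N:ℝ)+1) := by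
        field_simp
      rw [harg]
      have : Complex.I * ((π - π * a / ((N:ℝ)+1) : ℝ) : ℂ)
          = (π:ℂ) * Complex.I + Complex.I * ((-(π * a / ((N:ℝ)+1)) : ℝ) : ℂ) := by
        push_cast
        ring
      rw [this, Complex.exp_add, Complex.exp_pi_mul_I]
      ring
  rw [key, Finset.sum_neg_distrib, add_neg_cancel]
  exact norm_zero
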